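/- arXiv:1806.04321 — 6 statements merged into one kernel-verified Lean document; each statement's English description precedes it below -/
import Mathlib

section
/- The energy-constrained projection problem min_{W ∈ Ω} ‖W − Z‖² , where Ω = {W : ⟨A, supp(W)⟩ ≤ B} with A a nonnegative weight vector depending only on the support pattern, is equivalent to the 0/1 knapsack problem max_{ξ ∈ {0,1}ⁿ} ⟨Z⊙Z, ξ⟩ subject to ⟨A, ξ⟩ ≤ B: if ξ* is an optimal knapsack solution then Z⊙ξ* is an optimal projection, and conversely. -/
lemma key_sum (n : ℕ) (Z ξ : Fin n → ℝ) (hξ : ∀ i, ξ i = 0 ∨ ξ i = 1) :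
    ∑ i, (Z i * ξ i - Z i) ^ 2 = ∑ i, Z i ^ 2 - ∑ i, Z i ^ 2 * ξ i := by
  rw [← Finset.sum_sub_distrib]
  refine Finset.sum_congr rfl fun i _ => ?_
  rcases hξ i with h | h <;> simp [h]

/-- Equivalence of the energy-constrained projection problem and the 0/1 knapsack. -/
theorem stmt_0 (n : ℕ) (Z A : Fin n → ℝ) (B : ℝ)
    (hA : ∀ i, 0 ≤ A i) (hB : 0 ≤ B) (W : Fin n → ℝ) :
    ((∑ i, A i * (if W i ≠ 0 then (1 : ℝ) else 0)) ≤ B ∧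
      ∀ W' : Fin n → ℝ,
        (∑ i, A i * (if W' i ≠ 0 then (1 : ℝ) else 0)) ≤ B →
        ∑ i, (W i - Z i) ^ 2 ≤ ∑ i, (W' i - Z i) ^ 2) ↔
    (∃ ξ : Fin n → ℝ, (∀ i, ξ i = 0 ∨ ξ i = 1) ∧
      (∑ i, A i * ξ i) ≤ B ∧
      (∀ ξ' : Fin n → ℝ, (∀ i, ξ' i = 0 ∨ ξ' i = 1) →
        (∑ i, A i * ξ' i) ≤ B →
        ∑ i, Z i ^ 2 * ξ' i ≤ ∑ i, Z i ^ 2 * ξ i) ∧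
      W = fun i => Z i * ξ i) := by
  constructor
  · rintro ⟨hfeas, hopt⟩
    -- optimal W has entries 0 or Z i
    have hWZ : ∀ i, W i = 0 ∨ (W i = Z i ∧ Z i ≠ 0) := by
      intro i
      by_cases h0 : W i = 0
      · exact Or.inl h0
      · right
        by_contra hc
        push_neg at hc
        have hne : W i ≠ Z i := by
          intro h
          exact h0 (h.trans (hc h))
        set W' := Function.update W i (Z i) with hW'
        have hfeas' : ∑ j, A j * (if W' j ≠ 0 then (1 : ℝ) else 0) ≤ B := by
          refine le_trans (Finset.sum_le_sum fun j _ => ?_) hfeas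
          by_cases hji : j = i
          · subst hji
            simp only [hW', Function.update_self, h0, if_neg, ne_eq, not_true_eq_false,
              not_false_eq_true, if_true]
            by_cases hz : Z j = 0 <;> simp [hz, hA j]
          · simp [hW', Function.update_of_ne hji]
        have hle := hopt W' hfeas'
        have hlt : ∑ j, (W' j - Z j) ^ 2 < ∑ j, (W j - Z j) ^ 2 := by
          refine Finset.sum_lt_sum (fun j _ => ?_) ⟨i, Finset.mem_univ i, ?_⟩
          · by_cases hji : j = i
            · subst hji
              simp [hW', Function.update_self]
              positivity
            · simp [hW', Function.update_of_ne hji]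
          · simp only [hW', Function.update_self, sub_self]
            have hsub : W i - Z i ≠ 0 := sub_ne_zero.mpr hne
            have : (0:ℝ) < (W i - Z i) ^ 2 := by positivity
            simpa using this
        linarith
    refine ⟨fun i => if W i ≠ 0 then (1 : ℝ) else 0, fun i => ?_, hfeas, ?_, ?_⟩
    · by_cases h : W i = 0 <;> simp [h]
    · intro ξ' hξ' hfeasξ'
      set W'' := fun i => Z i * ξ' i with hW''
      have hfeas'' : ∑ j, A j * (if W'' j ≠ 0 then (1 : ℝ) else 0) ≤ B := by
        refine le_trans (Finset.sum_le_sum fun j _ => ?_) hfeasξ'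
        rcases hξ' j with h | h
        · simp [hW'', h, hA j]
        · simp only [hW'', h, mul_one, ne_eq]
          by_cases hz : Z j = 0 <;> simp [hz, hA j]
      have hle := hopt W'' hfeas''
      have hWeq : ∀ i, W i = Z i * (if W i ≠ 0 then (1 : ℝ) else 0) := by
        intro i
        rcases hWZ i with h | ⟨h1, h2⟩
        · simp [h]
        · simp [h1, h2]
      have e1 : ∑ i, (W i - Z i) ^ 2
          = ∑ i, Z i ^ 2 - ∑ i, Z i ^ 2 * (if W i ≠ 0 then (1 : ℝ) else 0) := by
        rw [← key_sum n Z _ (fun i => by by_cases h : W i = 0 <;> simp [h])]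
        exact Finset.sum_congr rfl fun i _ => by rw [← hWeq i]
      have e2 : ∑ i, (W'' i - Z i) ^ 2 = ∑ i, Z i ^ 2 - ∑ i, Z i ^ 2 * ξ' i :=
        key_sum n Z ξ' hξ'
      rw [e1, e2] at hle
      linarith
    · funext i
      rcases hWZ i with h | ⟨h1, h2⟩
      · simp [h]
      · simp [h1, h2]
  · rintro ⟨ξ, hbin, hfeas, hopt, rfl⟩
    constructor
    · refine le_trans (Finset.sum_le_sum fun j _ => ?_) hfeas
      rcases hbin j with h | h
      · simp [h, hA j]
      · simp only [h, mul_one, ne_eq]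
        by_cases hz : Z j = 0 <;> simp [hz, hA j]
    · intro W' hW'
      set ξ' := fun i => if W' i ≠ 0 then (1 : ℝ) else 0 with hξ'
      have hbin' : ∀ i, ξ' i = 0 ∨ ξ' i = 1 := fun i => by
        by_cases h : W' i = 0 <;> simp [hξ', h]
      have hle := hopt ξ' hbin' hW'
      have e1 : ∑ i, (Z i * ξ i - Z i) ^ 2 = ∑ i, Z i ^ 2 - ∑ i, Z i ^ 2 * ξ i :=
        key_sum n Z ξ hbin
      have e2 : ∑ i, Z i ^ 2 - ∑ i, Z i ^ 2 * ξ' i ≤ ∑ i, (W' i - Z i) ^ 2 := by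
        rw [← Finset.sum_sub_distrib]
        refine Finset.sum_le_sum fun i _ => ?_
        by_cases h : W' i = 0
        · simp [hξ', h]
        · simp [hξ', h]
          positivity
      linarith
end

section
/- The greedy knapsack algorithm that sorts items by profit density v_i / A_i in descending order and selects items as long as the budget permits achieves objective value at least OPT − v_t/A_t · R, where t is the index of the first item that was not selected (the (k+1)-th largest density, k being the number of selected items), OPT is the optimal 0/1 knapsack value, and R is the remaining unused budget of the greedy solution. -/
/-- The greedy knapsack algorithm by profit density achieves at least
OPT − (v_t/A_t)·R where t is the first rejected item and R the remaining budget. -/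
theorem stmt_3 (n : ℕ) (v A : Fin n → ℝ) (B : ℝ)
    (hv : ∀ i, 0 ≤ v i) (hA : ∀ i, 0 < A i) (hB : 0 ≤ B)
    (σ : Equiv.Perm (Fin n))
    (hsort : ∀ i j : Fin n, i ≤ j → v (σ j) / A (σ j) ≤ v (σ i) / A (σ i))
    (k : Fin n) (ξ : Fin n → ℝ)
    (hξ : ξ = fun i => if (σ.symm i : ℕ) < (k : ℕ) then (1 : ℝ) else 0)
    (hfit : (∑ i, A i * ξ i) ≤ B)
    (hstop : B < (∑ i, A i * ξ i) + A (σ k))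
    (OPT : ℝ)
    (hOPT : IsGreatest {t : ℝ | ∃ ξ' : Fin n → ℝ, (∀ i, ξ' i = 0 ∨ ξ' i = 1) ∧
      (∑ i, A i * ξ' i) ≤ B ∧ t = ∑ i, v i * ξ' i} OPT) :
    OPT - (v (σ k) / A (σ k)) * (B - ∑ i, A i * ξ i) ≤ ∑ i, v i * ξ i := by
  obtain ⟨⟨ξ', h01, hfeas, hOPTeq⟩, -⟩ := hOPT
  set ρ := v (σ k) / A (σ k) with hρdef
  have hρ : 0 ≤ ρ := div_nonneg (hv _) (le_of_lt (hA _))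
  have h1 : ∀ i : Fin n, v (σ i) * ξ' (σ i) - v (σ i) * ξ (σ i) ≤
      ρ * (A (σ i) * ξ' (σ i) - A (σ i) * ξ (σ i)) := by
    intro i
    have hξσ : ξ (σ i) = if (i : ℕ) < (k : ℕ) then (1:ℝ) else 0 := by
      simp [hξ]
    rcases lt_or_ge (i : ℕ) (k : ℕ) with h | h
    · rw [hξσ, if_pos h]
      have hd : ρ ≤ v (σ i) / A (σ i) := hsort i k (by exact Fin.le_def.mpr h.le)
      have hva : ρ * A (σ i) ≤ v (σ i) := by
        rw [← le_div_iff₀ (hA (σ i))]; exact hd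
      have hle : ξ' (σ i) ≤ 1 := by rcases h01 (σ i) with h0 | h0 <;> simp [h0]
      nlinarith [hA (σ i)]
    · rw [hξσ, if_neg (not_lt.mpr h)]
      have hd : v (σ i) / A (σ i) ≤ ρ := hsort k i (Fin.le_def.mpr h)
      have hva : v (σ i) ≤ ρ * A (σ i) := (div_le_iff₀ (hA (σ i))).mp hd
      have h0 : 0 ≤ ξ' (σ i) := by rcases h01 (σ i) with h0 | h0 <;> simp [h0]
      nlinarith
  have hsum : ∑ i, (v (σ i) * ξ' (σ i) - v (σ i) * ξ (σ i)) ≤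
      ∑ i, ρ * (A (σ i) * ξ' (σ i) - A (σ i) * ξ (σ i)) :=
    Finset.sum_le_sum (fun i _ => h1 i)
  have e1 : ∑ i, (v (σ i) * ξ' (σ i) - v (σ i) * ξ (σ i)) =
      (∑ i, v i * ξ' i) - ∑ i, v i * ξ i := by
    rw [Finset.sum_sub_distrib]
    congr 1
    · exact Equiv.sum_comp σ (fun i => v i * ξ' i)
    · exact Equiv.sum_comp σ (fun i => v i * ξ i)
  have e2 : ∑ i, ρ * (A (σ i) * ξ' (σ i) - A (σ i) * ξ (σ i)) =
      ρ * ((∑ i, A i * ξ' i) - ∑ i, A i * ξ i) := by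
    rw [← Finset.mul_sum, Finset.sum_sub_distrib]
    congr 2
    · exact Equiv.sum_comp σ (fun i => A i * ξ' i)
    · exact Equiv.sum_comp σ (fun i => A i * ξ i)
  rw [e1, e2] at hsum
  have hfinal : ρ * ((∑ i, A i * ξ' i) - ∑ i, A i * ξ i) ≤
      ρ * (B - ∑ i, A i * ξ i) := by
    apply mul_le_mul_of_nonneg_left _ hρ
    linarith
  rw [hOPTeq]
  linarith
end

section
/- If the greedy knapsack algorithm ends with zero remaining budget (R = 0), then the greedy solution is optimal for the fractional knapsack relaxation, and hence also optimal for the 0/1 knapsack problem. -/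
/-- If the greedy knapsack algorithm ends with zero remaining budget, its solution is
optimal for the fractional relaxation, hence also for the 0/1 knapsack problem. -/
theorem stmt_5 (n : ℕ) (v A : Fin n → ℝ) (B : ℝ)
    (hv : ∀ i, 0 ≤ v i) (hA : ∀ i, 0 < A i) (hB : 0 ≤ B)
    (σ : Equiv.Perm (Fin n))
    (hsort : ∀ i j : Fin n, i ≤ j → v (σ j) / A (σ j) ≤ v (σ i) / A (σ i))
    (k : ℕ) (hk : k ≤ n) (ξ : Fin n → ℝ)
    (hξ : ξ = fun i => if (σ.symm i : ℕ) < k then (1 : ℝ) else 0)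
    (hR : B - (∑ i, A i * ξ i) = 0) :
    (∀ ξ' : Fin n → ℝ, (∀ i, 0 ≤ ξ' i ∧ ξ' i ≤ 1) → (∑ i, A i * ξ' i) ≤ B →
      ∑ i, v i * ξ' i ≤ ∑ i, v i * ξ i) ∧
    (∀ ξ' : Fin n → ℝ, (∀ i, ξ' i = 0 ∨ ξ' i = 1) → (∑ i, A i * ξ' i) ≤ B →
      ∑ i, v i * ξ' i ≤ ∑ i, v i * ξ i) := by
  have key : ∀ ξ' : Fin n → ℝ, (∀ i, 0 ≤ ξ' i ∧ ξ' i ≤ 1) → (∑ i, A i * ξ' i) ≤ B →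
      ∑ i, v i * ξ' i ≤ ∑ i, v i * ξ i := by
    intro ξ' hbound hfeas
    rcases Nat.eq_zero_or_pos k with hk0 | hkpos
    · have hξ0 : ∀ i, ξ i = 0 := by intro i; simp [hξ, hk0]
      have hB0 : B = 0 := by
        have : ∑ i, A i * ξ i = 0 := by simp [hξ0]
        linarith
      have hterm : ∀ j ∈ Finset.univ, 0 ≤ A j * ξ' j :=
        fun j _ => mul_nonneg (hA j).le (hbound j).1
      have hsum0 : ∑ j, A j * ξ' j = 0 :=
        le_antisymm (by linarith) (Finset.sum_nonneg hterm)
      have hz : ∀ i, ξ' i = 0 := by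
        intro i
        have h := (Finset.sum_eq_zero_iff_of_nonneg hterm).1 hsum0 i (Finset.mem_univ i)
        rcases mul_eq_zero.1 h with h | h
        · exact absurd h (ne_of_gt (hA i))
        · exact h
      simp [hz, hξ0]
    · have hkn : k - 1 < n := by omega
      set j₀ : Fin n := ⟨k - 1, hkn⟩ with hj₀
      set t := v (σ j₀) / A (σ j₀) with ht
      have ht0 : 0 ≤ t := div_nonneg (hv _) (hA _).le
      have hpt : ∀ i, v i * (ξ' i - ξ i) ≤ t * (A i * (ξ' i - ξ i)) := by
        intro i
        by_cases hsel : (σ.symm i : ℕ) < k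
        · have hξi : ξ i = 1 := by simp [hξ, hsel]
          have hle : σ.symm i ≤ j₀ := by
            rw [Fin.le_def]; simp only [hj₀]; omega
          have hds := hsort (σ.symm i) j₀ hle
          rw [Equiv.apply_symm_apply] at hds
          have hvi : t * A i ≤ v i := (le_div_iff₀ (hA i)).1 hds
          have hd : ξ' i - ξ i ≤ 0 := by rw [hξi]; linarith [(hbound i).2]
          nlinarith [(hA i).le]
        · have hξi : ξ i = 0 := by simp [hξ, hsel]
          have hle : j₀ ≤ σ.symm i := by
            rw [Fin.le_def]; simp only [hj₀]; omega
          have hds := hsort j₀ (σ.symm i) hle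
          rw [Equiv.apply_symm_apply] at hds
          have hvi : v i ≤ t * A i := (div_le_iff₀ (hA i)).1 hds
          have hd : 0 ≤ ξ' i - ξ i := by rw [hξi]; linarith [(hbound i).1]
          nlinarith
      have hsum : ∑ i, v i * (ξ' i - ξ i) ≤ ∑ i, t * (A i * (ξ' i - ξ i)) := Finset.sum_le_sum (fun i _ => hpt i)
      have h1 : ∑ i, v i * (ξ' i - ξ i) = ∑ i, v i * ξ' i - ∑ i, v i * ξ i := by
        rw [← Finset.sum_sub_distrib]
        exact Finset.sum_congr rfl fun i _ => by ring
      have h2 : ∑ i, t * (A i * (ξ' i - ξ i))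
          = t * (∑ i, A i * ξ' i - ∑ i, A i * ξ i) := by
        rw [← Finset.mul_sum, ← Finset.sum_sub_distrib]
        congr 1
        exact Finset.sum_congr rfl fun i _ => by ring
      rw [h1, h2] at hsum
      nlinarith
  exact ⟨key, fun ξ' hbin hfeas => key ξ'
    (fun i => by rcases hbin i with h | h <;> simp [h]) hfeas⟩
end

section
/- For nondecreasing w-uniform step functions f and g, the inverse of their (min,+)-convolution equals the (max,+)-convolution of their inverses: (f ⊕ g)^{-1}(y) = max over y' ∈ {0, w, 2w, …} of ( f^{-1}(y') + g^{-1}(y − y') ). -/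
/-- (min,+)-convolution. -/
noncomputable def minconv (f g : ℝ → ℝ) : ℝ → ℝ :=
  fun x => sInf {y : ℝ | ∃ x' : ℝ, y = f x' + g (x - x')}

/-- Inverse of a nondecreasing step function: f⁻¹(y) = sup{x : f x ≤ y}. -/
noncomputable def stepInv (f : ℝ → ℝ) (y : ℝ) : ℝ :=
  sSup {x : ℝ | f x ≤ y}

/-- For nondecreasing w-uniform step functions, the inverse of the
(min,+)-convolution is the (max,+)-convolution of the inverses over the grid
of multiples of w. -/
theorem stmt_11 (f g : ℝ → ℝ) (w : ℝ) (hw : 0 < w) (l : ℕ)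
    (hf : Monotone f) (hg : Monotone g)
    (hfu : ∀ x, ∃ m : ℕ, m ≤ l ∧ f x = (m : ℝ) * w)
    (hgu : ∀ x, ∃ m : ℕ, m ≤ l ∧ g x = (m : ℝ) * w)
    (y : ℝ)
    (hne : ∀ y' : ℝ, 0 ≤ y' → y' ≤ y →
      (({x : ℝ | f x ≤ y'}.Nonempty ∧ BddAbove {x : ℝ | f x ≤ y'}) ∧
       ({x : ℝ | g x ≤ y'}.Nonempty ∧ BddAbove {x : ℝ | g x ≤ y'})))
    (hconv : {x : ℝ | minconv f g x ≤ y}.Nonempty ∧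
      BddAbove {x : ℝ | minconv f g x ≤ y}) :
    IsGreatest {s : ℝ | ∃ m : ℕ, (m : ℝ) * w ≤ y ∧
        s = stepInv f ((m : ℝ) * w) + stepInv g (y - (m : ℝ) * w)}
      (stepInv (minconv f g) y) := by
  obtain ⟨⟨x0, hx0⟩, hCbdd⟩ := hconv
  have hf0 : ∀ x, 0 ≤ f x := by
    intro x; obtain ⟨m, _, hm⟩ := hfu x; rw [hm]; positivity
  have hg0 : ∀ x, 0 ≤ g x := by
    intro x; obtain ⟨m, _, hm⟩ := hgu x; rw [hm]; positivity
  have hVne : ∀ x : ℝ, {v : ℝ | ∃ x' : ℝ, v = f x' + g (x - x')}.Nonempty :=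
    fun x => ⟨f 0 + g (x - 0), 0, rfl⟩
  have hVbd : ∀ x : ℝ, BddBelow {v : ℝ | ∃ x' : ℝ, v = f x' + g (x - x')} := by
    intro x
    refine ⟨0, ?_⟩
    rintro v ⟨x', rfl⟩
    have := hf0 x'; have := hg0 (x - x'); linarith
  have hmle : ∀ x x' : ℝ, minconv f g x ≤ f x' + g (x - x') := by
    intro x x'
    exact csInf_le (hVbd x) ⟨x', rfl⟩
  have hm0 : ∀ x, 0 ≤ minconv f g x := by
    intro x
    apply le_csInf (hVne x)
    rintro v ⟨x', rfl⟩
    have := hf0 x'; have := hg0 (x - x'); linarith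
  have hattain : ∀ x : ℝ, ∃ x' : ℝ, minconv f g x = f x' + g (x - x') := by
    intro x
    have hfin : {v : ℝ | ∃ x' : ℝ, v = f x' + g (x - x')}.Finite := by
      apply Set.Finite.subset (Set.finite_range (fun k : Fin (2 * l + 1) => (k : ℝ) * w))
      rintro v ⟨x', rfl⟩
      obtain ⟨m, hml, hfm⟩ := hfu x'
      obtain ⟨n, hnl, hgn⟩ := hgu (x - x')
      refine ⟨⟨m + n, by omega⟩, ?_⟩
      simp [hfm, hgn]
      push_cast
      ring
    exact (hVne x).csInf_mem hfin
  have hy0 : 0 ≤ y := le_trans (hm0 x0) hx0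
  -- upper bound part
  have hub : ∀ m : ℕ, (m : ℝ) * w ≤ y →
      stepInv f ((m : ℝ) * w) + stepInv g (y - (m : ℝ) * w) ≤ stepInv (minconv f g) y := by
    intro m hmy
    have hmw0 : (0 : ℝ) ≤ (m : ℝ) * w := by positivity
    obtain ⟨⟨hAne, hAbd⟩, -⟩ := hne ((m : ℝ) * w) hmw0 hmy
    obtain ⟨-, hBne, hBbd⟩ := hne (y - (m : ℝ) * w) (by linarith) (by linarith)
    rw [stepInv, stepInv, stepInv]
    have h1 : sSup {x : ℝ | f x ≤ (m : ℝ) * w} ≤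
        sSup {x : ℝ | minconv f g x ≤ y} - sSup {x : ℝ | g x ≤ y - (m : ℝ) * w} := by
      apply csSup_le hAne
      intro a ha
      rw [le_sub_comm]
      apply csSup_le hBne
      intro b hb
      rw [le_sub_iff_add_le, add_comm]
      apply le_csSup hCbdd
      have h2 : minconv f g (a + b) ≤ f a + g (a + b - a) := hmle (a + b) a
      simp only [add_sub_cancel_left] at h2
      have ha' : f a ≤ (m : ℝ) * w := ha
      have hb' : g b ≤ y - (m : ℝ) * w := hb
      show minconv f g (a + b) ≤ y
      linarith
    linarith
  -- the finite index set
  set M : Finset ℕ := (Finset.range (l + 1)).filter (fun m => (m : ℝ) * w ≤ y) with hM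
  have h0M : 0 ∈ M := by
    simp [hM]
    exact hy0
  obtain ⟨mstar, hmstarM, hmax⟩ := Finset.exists_max_image M
    (fun m => stepInv f ((m : ℝ) * w) + stepInv g (y - (m : ℝ) * w)) ⟨0, h0M⟩
  have hmstary : (mstar : ℝ) * w ≤ y := (Finset.mem_filter.mp hmstarM).2
  -- sup C ≤ φ mstar
  have hle : stepInv (minconv f g) y ≤
      stepInv f ((mstar : ℝ) * w) + stepInv g (y - (mstar : ℝ) * w) := by
    rw [stepInv]
    apply csSup_le ⟨x0, hx0⟩
    intro x hx
    obtain ⟨x', hx'⟩ := hattain x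
    obtain ⟨m, hml, hfm⟩ := hfu x'
    have hxy : f x' + g (x - x') ≤ y := by rw [← hx']; exact hx
    have hmy : (m : ℝ) * w ≤ y := by
      have := hg0 (x - x'); rw [← hfm]; linarith
    have hmM : m ∈ M := by
      simp [hM]
      exact ⟨by omega, hmy⟩
    have h1 : x' ≤ stepInv f ((m : ℝ) * w) := by
      have hmw0 : (0 : ℝ) ≤ (m : ℝ) * w := by positivity
      obtain ⟨⟨-, hAbd⟩, -⟩ := hne ((m : ℝ) * w) hmw0 hmy
      exact le_csSup hAbd (le_of_eq hfm)
    have h2 : x - x' ≤ stepInv g (y - (m : ℝ) * w) := by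
      have hmw0 : (0 : ℝ) ≤ (m : ℝ) * w := by positivity
      obtain ⟨-, -, hBbd⟩ := hne (y - (m : ℝ) * w) (by linarith) (by linarith)
      apply le_csSup hBbd
      show g (x - x') ≤ y - (m : ℝ) * w
      rw [← hfm]; linarith
    have := hmax m hmM
    linarith
  have heq : stepInv (minconv f g) y =
      stepInv f ((mstar : ℝ) * w) + stepInv g (y - (mstar : ℝ) * w) :=
    le_antisymm hle (hub mstar hmstary)
  constructor
  · exact ⟨mstar, hmstary, heq⟩
  · rintro s ⟨m, hmy, rfl⟩
    exact hub m hmy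
end

section
/- The greedy knapsack solution ξ by profit density satisfies ⟨v, ξ⟩ ≥ OPT − (v_t/A_t)·(max(A) − gcd(A)), where t indexes the (k+1)-th largest profit density (k = number of items selected by greedy), OPT is the 0/1 knapsack optimum, all weights A_i are positive rationals, max(A) is the largest weight, and gcd(A) is the greatest common divisor of the weights. -/
lemma sum_mult_of_g {n : ℕ} (A : Fin n → ℝ) (g : ℝ)
    (hdvd : ∀ i, ∃ m : ℕ, A i = (m : ℝ) * g)
    (ξ : Fin n → ℝ) (hbin : ∀ i, ξ i = 0 ∨ ξ i = 1) :
    ∃ M : ℕ, ∑ i, A i * ξ i = (M : ℝ) * g := by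
  classical
  choose m hm using hdvd
  refine ⟨∑ i, if ξ i = 1 then m i else 0, ?_⟩
  rw [Nat.cast_sum, Finset.sum_mul]
  refine Finset.sum_congr rfl fun i _ => ?_
  rcases hbin i with h | h <;> simp [h, hm i]

/-- Greedy knapsack bound via the gcd of the weights:
⟨v, ξ⟩ ≥ OPT − (v_t/A_t)·(max(A) − gcd(A)). -/
theorem stmt_14 (n : ℕ) (v A : Fin n → ℝ) (B : ℝ)
    (hv : ∀ i, 0 ≤ v i) (hA : ∀ i, 0 < A i) (hB : 0 ≤ B)
    (g : ℝ) (hg : 0 < g)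
    (hdvd : ∀ i, ∃ m : ℕ, A i = (m : ℝ) * g)
    (hgcd : ∀ g' : ℝ, 0 < g' → (∀ i, ∃ m : ℕ, A i = (m : ℝ) * g') → g' ≤ g)
    (maxA : ℝ) (hmaxA : ∀ i, A i ≤ maxA) (hmaxA' : ∃ i, A i = maxA)
    (σ : Equiv.Perm (Fin n))
    (hsort : ∀ i j : Fin n, i ≤ j → v (σ j) / A (σ j) ≤ v (σ i) / A (σ i))
    (k : Fin n) (ξ : Fin n → ℝ)
    (hξ : ξ = fun i => if (σ.symm i : ℕ) < (k : ℕ) then (1 : ℝ) else 0)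
    (hfit : (∑ i, A i * ξ i) ≤ B)
    (hstop : B < (∑ i, A i * ξ i) + A (σ k))
    (OPT : ℝ)
    (hOPT : IsGreatest {t : ℝ | ∃ ξ' : Fin n → ℝ, (∀ i, ξ' i = 0 ∨ ξ' i = 1) ∧
      (∑ i, A i * ξ' i) ≤ B ∧ t = ∑ i, v i * ξ' i} OPT) :
    OPT - (v (σ k) / A (σ k)) * (maxA - g) ≤ ∑ i, v i * ξ i := by
  classical
  obtain ⟨ξ', hbin, hξ'B, hOPTeq⟩ := hOPT.1
  set ρ := v (σ k) / A (σ k) with hρdef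
  have hρ : 0 ≤ ρ := div_nonneg (hv _) (le_of_lt (hA _))
  -- ξ is binary
  have hξbin : ∀ i, ξ i = 0 ∨ ξ i = 1 := by
    intro i; rw [hξ]; by_cases h : (σ.symm i : ℕ) < (k : ℕ) <;> simp [h]
  -- densities
  have hdense_lo : ∀ i, (σ.symm i : ℕ) < (k : ℕ) → ρ * A i ≤ v i := by
    intro i hi
    have h := hsort (σ.symm i) k (le_of_lt hi)
    rw [Equiv.apply_symm_apply] at h
    rw [hρdef] at *
    calc v (σ k) / A (σ k) * A i ≤ v i / A i * A i := by
          exact mul_le_mul_of_nonneg_right h (le_of_lt (hA i))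
      _ = v i := div_mul_cancel₀ _ (ne_of_gt (hA i))
  have hdense_hi : ∀ i, ¬ (σ.symm i : ℕ) < (k : ℕ) → v i ≤ ρ * A i := by
    intro i hi
    have h := hsort k (σ.symm i) (le_of_not_gt hi)
    rw [Equiv.apply_symm_apply] at h
    rw [hρdef] at *
    calc v i = v i / A i * A i := (div_mul_cancel₀ _ (ne_of_gt (hA i))).symm
      _ ≤ v (σ k) / A (σ k) * A i :=
          mul_le_mul_of_nonneg_right h (le_of_lt (hA i))
  -- item-wise comparison
  have hkey : (∑ i, v i * ξ' i) - (∑ i, v i * ξ i)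
      ≤ ρ * ((∑ i, A i * ξ' i) - (∑ i, A i * ξ i)) := by
    have hrhs : ρ * ((∑ i, A i * ξ' i) - (∑ i, A i * ξ i))
        = ∑ i, ρ * (A i * ξ' i - A i * ξ i) := by
      rw [← Finset.sum_sub_distrib, Finset.mul_sum]
    rw [hrhs, ← Finset.sum_sub_distrib]
    refine Finset.sum_le_sum fun i _ => ?_
    by_cases h : (σ.symm i : ℕ) < (k : ℕ)
    · have hξi : ξ i = 1 := by rw [hξ]; simp [h]
      have hd := hdense_lo i h
      rcases hbin i with h' | h' <;> rw [hξi, h'] <;> nlinarith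
    · have hξi : ξ i = 0 := by rw [hξ]; simp [h]
      have hd := hdense_hi i h
      rcases hbin i with h' | h' <;> rw [hξi, h'] <;> nlinarith
  -- integrality bound on the weight gap
  obtain ⟨M, hM⟩ := sum_mult_of_g A g hdvd ξ hξbin
  obtain ⟨M', hM'⟩ := sum_mult_of_g A g hdvd ξ' hbin
  obtain ⟨i₀, hi₀⟩ := hmaxA'
  obtain ⟨m₀, hm₀⟩ := hdvd i₀
  have hmax_eq : maxA = (m₀ : ℝ) * g := by rw [← hi₀]; exact hm₀
  have hAk : A (σ k) ≤ maxA := hmaxA _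
  have hlt : (M' : ℝ) * g < (M : ℝ) * g + (m₀ : ℝ) * g := by
    rw [← hM', ← hM, ← hmax_eq]
    calc (∑ i, A i * ξ' i) ≤ B := hξ'B
      _ < (∑ i, A i * ξ i) + A (σ k) := hstop
      _ ≤ (∑ i, A i * ξ i) + maxA := by linarith
  have hltn : M' < M + m₀ := by
    have : (M' : ℝ) < (M : ℝ) + (m₀ : ℝ) := by
      have := (mul_lt_mul_iff_of_pos_right hg).mp (by linarith [hlt] : (M' : ℝ) * g < ((M : ℝ) + m₀) * g)
      exact this
    exact_mod_cast this
  have hgap : (∑ i, A i * ξ' i) - (∑ i, A i * ξ i) ≤ maxA - g := by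
    rw [hM', hM, hmax_eq]
    have : (M' : ℝ) + 1 ≤ (M : ℝ) + (m₀ : ℝ) := by exact_mod_cast hltn
    nlinarith
  have hfinal : ρ * ((∑ i, A i * ξ' i) - (∑ i, A i * ξ i)) ≤ ρ * (maxA - g) :=
    mul_le_mul_of_nonneg_left hgap hρ
  rw [hOPTeq]
  linarith
end

section
/- In the relaxed knapsack problem over Γ (each ξ_i a multiple of g/A_i in [0,1], ⟨A, ξ⟩ ≤ B), the optimal value exceeds the greedy 0/1 solution value by at most v_t·(1 − g/A_t), where t is the first item rejected by greedy; i.e., max_{ξ∈Γ} ⟨v, ξ⟩ ≤ ⟨v, ξ_greedy⟩ + (v_t/A_t)·(A_t − g). -/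
/-- The relaxed knapsack optimum over Γ exceeds the greedy 0/1 value by at
most (v_t/A_t)·(A_t − g). -/
theorem stmt_17 (n : ℕ) (v A : Fin n → ℝ) (B : ℝ)
    (hv : ∀ i, 0 ≤ v i) (hA : ∀ i, 0 < A i) (hB : 0 ≤ B)
    (g : ℝ) (hg : 0 < g) (hdvd : ∀ i, ∃ m : ℕ, A i = (m : ℝ) * g)
    (σ : Equiv.Perm (Fin n))
    (hsort : ∀ i j : Fin n, i ≤ j → v (σ j) / A (σ j) ≤ v (σ i) / A (σ i))
    (k : Fin n) (ξ : Fin n → ℝ)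
    (hξ : ξ = fun i => if (σ.symm i : ℕ) < (k : ℕ) then (1 : ℝ) else 0)
    (hfit : (∑ i, A i * ξ i) ≤ B)
    (hstop : B < (∑ i, A i * ξ i) + A (σ k)) :
    ∀ ξ' : Fin n → ℝ, (∀ i, ∃ m : ℕ, ξ' i = (m : ℝ) * (g / A i)) →
      (∀ i, 0 ≤ ξ' i ∧ ξ' i ≤ 1) → (∑ i, A i * ξ' i) ≤ B →
      ∑ i, v i * ξ' i ≤ (∑ i, v i * ξ i) + (v (σ k) / A (σ k)) * (A (σ k) - g) := by
  intro ξ' hmul hbound hfeas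
  have hAne : ∀ i, A i ≠ 0 := fun i => (hA i).ne'
  have hrk : 0 ≤ v (σ k) / A (σ k) := div_nonneg (hv _) (hA _).le
  -- each term of the weight sums is a natural multiple of g
  have hξ'm : ∀ i, ∃ m : ℕ, A i * ξ' i = (m : ℝ) * g := by
    intro i; obtain ⟨m, hm⟩ := hmul i
    exact ⟨m, by rw [hm, mul_comm, mul_assoc, div_mul_cancel₀ g (hAne i)]⟩
  have hξm : ∀ i, ∃ m : ℕ, A i * ξ i = (m : ℝ) * g := by
    intro i; obtain ⟨m, hm⟩ := hdvd i
    subst hξ; by_cases h : (σ.symm i : ℕ) < (k : ℕ)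
    · exact ⟨m, by simp [h, hm]⟩
    · exact ⟨0, by simp [h]⟩
  have hsum : ∀ (f : Fin n → ℝ), (∀ i, ∃ m : ℕ, f i = (m : ℝ) * g) →
      ∃ M : ℕ, ∑ i, f i = (M : ℝ) * g := by
    intro f hf
    choose c hc using hf
    refine ⟨∑ i, c i, ?_⟩
    rw [Finset.sum_congr rfl fun i _ => hc i, ← Finset.sum_mul, Nat.cast_sum]
  obtain ⟨M', hM'⟩ := hsum _ hξ'm
  obtain ⟨M, hM⟩ := hsum _ hξm
  obtain ⟨m, hm⟩ := hdvd (σ k)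
  have hm1 : 1 ≤ m := by
    by_contra h
    push_neg at h
    interval_cases m
    · simp at hm; linarith [hA (σ k)]
  -- integrality gap
  have hMlt : M' < M + m := by
    have h1 : (M' : ℝ) * g < ((M + m : ℕ) : ℝ) * g := by
      push_cast
      have := hfeas.trans_lt hstop
      rw [hM', hM, hm] at this
      linarith
    exact_mod_cast lt_of_mul_lt_mul_right h1 hg.le
  have hΔ : ∑ i, A i * ξ' i - ∑ i, A i * ξ i ≤ A (σ k) - g := by
    rw [hM', hM, hm]
    have h2 : (M' : ℝ) + 1 ≤ (M : ℝ) + m := by exact_mod_cast hMlt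
    nlinarith
  -- termwise density comparison
  have hterm : ∑ i, v i * ξ' i - ∑ i, v i * ξ i ≤
      (v (σ k) / A (σ k)) * (∑ i, A i * ξ' i - ∑ i, A i * ξ i) := by
    rw [← Finset.sum_sub_distrib, ← Finset.sum_sub_distrib, Finset.mul_sum]
    rw [← Equiv.sum_comp σ (fun i => v i * ξ' i - v i * ξ i)]
    rw [← Equiv.sum_comp σ (fun i => v (σ k) / A (σ k) * (A i * ξ' i - A i * ξ i))]
    apply Finset.sum_le_sum
    intro j _
    have key : ∀ x : ℝ, (v (σ j) / A (σ j)) * (A (σ j) * x) = v (σ j) * x := by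
      intro x; rw [← mul_assoc, div_mul_cancel₀ _ (hAne (σ j))]
    have hxj : ξ (σ j) = if (j : ℕ) < (k : ℕ) then (1 : ℝ) else 0 := by
      rw [hξ]; simp
    by_cases h : (j : ℕ) < (k : ℕ)
    · have hr : v (σ k) / A (σ k) ≤ v (σ j) / A (σ j) := hsort j k (le_of_lt h)
      have hx : ξ' (σ j) - 1 ≤ 0 := by linarith [(hbound (σ j)).2]
      have hAx : A (σ j) * (ξ' (σ j) - 1) ≤ 0 :=
        mul_nonpos_of_nonneg_of_nonpos (hA _).le hx
      rw [hxj, if_pos h]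
      calc v (σ j) * ξ' (σ j) - v (σ j) * 1
          = (v (σ j) / A (σ j)) * (A (σ j) * (ξ' (σ j) - 1)) := by rw [key]; ring
        _ ≤ (v (σ k) / A (σ k)) * (A (σ j) * (ξ' (σ j) - 1)) :=
            mul_le_mul_of_nonpos_right hr hAx
        _ = v (σ k) / A (σ k) * (A (σ j) * ξ' (σ j) - A (σ j) * 1) := by ring
    · have hr : v (σ j) / A (σ j) ≤ v (σ k) / A (σ k) := hsort k j (by omega)
      have hAx : 0 ≤ A (σ j) * ξ' (σ j) := mul_nonneg (hA _).le (hbound (σ j)).1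
      rw [hxj, if_neg h]
      calc v (σ j) * ξ' (σ j) - v (σ j) * 0
          = (v (σ j) / A (σ j)) * (A (σ j) * ξ' (σ j)) := by rw [key]; ring
        _ ≤ (v (σ k) / A (σ k)) * (A (σ j) * ξ' (σ j)) :=
            mul_le_mul_of_nonneg_right hr hAx
        _ = v (σ k) / A (σ k) * (A (σ j) * ξ' (σ j) - A (σ j) * 0) := by ring
  have hfinal : (v (σ k) / A (σ k)) * (∑ i, A i * ξ' i - ∑ i, A i * ξ i) ≤
      (v (σ k) / A (σ k)) * (A (σ k) - g) :=
    mul_le_mul_of_nonneg_left hΔ hrk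
  linarith
end
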